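/- Let X be a right A-Galois object. Then there exists a (necessarily unique) linear functional φ_X on X such that (id ⊗ φ)(α(x)) = φ_X(x)·1 for all x ∈ X. This φ_X is faithful, i.e. if φ_X(xy) = 0 for all y ∈ X then x = 0, and if φ_X(yx) = 0 for all y ∈ X then x = 0. Moreover, if δ is the modular element of A, then φ_X is δ-invariant: (φ_X ⊗ id)(α(x)) = φ_X(x)·δ for all x ∈ X. -/

import Mathlib

open TensorProduct

noncomputable section

variable (k : Type*) [Field k]

/-- Apply a linear functional to the second tensor factor. -/
def applySnd {M N : Type*} [AddCommGroup M] [Module k M]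
    [AddCommGroup N] [Module k N] (f : N →ₗ[k] k) : M ⊗[k] N →ₗ[k] M :=
  (TensorProduct.rid k M).toLinearMap ∘ₗ LinearMap.lTensor M f

/-- Apply a linear functional to the first tensor factor. -/
def applyFst {M N : Type*} [AddCommGroup M] [Module k M]
    [AddCommGroup N] [Module k N] (f : M →ₗ[k] k) : M ⊗[k] N →ₗ[k] N :=
  (TensorProduct.lid k N).toLinearMap ∘ₗ LinearMap.rTensor N f

variable (A X : Type*) [Ring A] [HopfAlgebra k A] [Ring X] [Algebra k X]

/-- The Galois map `V : X ⊗ X → X ⊗ A`, `x ⊗ y ↦ (x ⊗ 1) * α y`. -/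
def galoisV (α : X →ₐ[k] X ⊗[k] A) : X ⊗[k] X →ₗ[k] X ⊗[k] A :=
  LinearMap.mul' k (X ⊗[k] A) ∘ₗ
    TensorProduct.map ((TensorProduct.mk k X A).flip 1) α.toLinearMap

/-- A Hopf algebra with bijective antipode and faithful left integral `φ`,
together with a right Galois coaction `α` on `X` with trivial coinvariants. -/
structure GaloisContext where
  φ : A →ₗ[k] k
  φ_ne : φ ≠ 0
  φ_integral : ∀ a : A, applySnd k φ (Coalgebra.comul a) = φ a • (1 : A)
  φ_faithful_left : ∀ a : A, (∀ b : A, φ (a * b) = 0) → a = 0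
  φ_faithful_right : ∀ a : A, (∀ b : A, φ (b * a) = 0) → a = 0
  antipode_bijective : Function.Bijective (HopfAlgebra.antipode (R := k) (A := A))
  α : X →ₐ[k] X ⊗[k] A
  coassoc : ∀ x : X,
    TensorProduct.assoc k X A A ((LinearMap.rTensor A α.toLinearMap) (α x))
      = LinearMap.lTensor X (Coalgebra.comul (R := k) (A := A)) (α x)
  counit_id : ∀ x : X,
    applySnd k (Coalgebra.counit (R := k) (A := A)) (α x) = x
  coinv_trivial : ∀ x : X, α x = x ⊗ₜ[k] (1 : A) → ∃ c : k, x = c • (1 : X)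
  galois : Function.Bijective (galoisV k A X α)

variable {k A X}

/-- The Galois map as a linear equivalence. -/
def GaloisContext.V (G : GaloisContext k A X) : (X ⊗[k] X) ≃ₗ[k] (X ⊗[k] A) :=
  LinearEquiv.ofBijective (galoisV k A X G.α) G.galois

/-- The map `β : A → X ⊗ X`, `a ↦ V⁻¹(1 ⊗ a)`. -/
def GaloisContext.β (G : GaloisContext k A X) : A →ₗ[k] X ⊗[k] X :=
  G.V.symm.toLinearMap ∘ₗ TensorProduct.mk k X A 1

end

noncomputable section PhiXAux
set_option maxHeartbeats 1000000
set_option synthInstance.maxHeartbeats 1000000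

open TensorProduct LinearMap

variable {k : Type*} [Field k] {A X : Type*} [Ring A] [HopfAlgebra k A]
  [Ring X] [Algebra k X]

@[simp] lemma applySnd_tmul {M N : Type*} [AddCommGroup M] [Module k M]
    [AddCommGroup N] [Module k N] (f : N →ₗ[k] k) (x : M) (a : N) :
    applySnd k f (x ⊗ₜ[k] a) = f a • x := by
  simp [applySnd]

@[simp] lemma applyFst_tmul {M N : Type*} [AddCommGroup M] [Module k M]
    [AddCommGroup N] [Module k N] (f : M →ₗ[k] k) (x : M) (a : N) :
    applyFst k f (x ⊗ₜ[k] a) = f x • a := by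
  simp [applyFst]

lemma applySnd_lTensor {M N P : Type*} [AddCommGroup M] [Module k M]
    [AddCommGroup N] [Module k N] [AddCommGroup P] [Module k P]
    (g : N →ₗ[k] k) (h : P →ₗ[k] N) (t : M ⊗[k] P) :
    applySnd k g (lTensor M h t) = applySnd k (g ∘ₗ h) t := by
  induction t using TensorProduct.induction_on with
  | zero => simp
  | tmul x a => simp
  | add s t hs ht => simp [hs, ht]

lemma coord_applySnd {M N : Type*} [AddCommGroup M] [Module k M]
    [AddCommGroup N] [Module k N] (f : M →ₗ[k] k) (g : N →ₗ[k] k) (t : M ⊗[k] N) :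
    f (applySnd k g t) = g (applyFst k f t) := by
  induction t using TensorProduct.induction_on with
  | zero => simp
  | tmul x a => simp [mul_comm]
  | add s t hs ht => simp [hs, ht]

lemma eq_zero_of_forall_applyFst {M N : Type*} [AddCommGroup M] [Module k M]
    [AddCommGroup N] [Module k N] (t : M ⊗[k] N)
    (h : ∀ f : M →ₗ[k] k, applyFst k f t = 0) : t = 0 := by
  classical
  let b := Module.Basis.ofVectorSpace k M
  let e : M ⊗[k] N ≃ₗ[k] _ ⊗[k] N :=
    TensorProduct.congr b.repr (LinearEquiv.refl k N)
  have key : ∀ (s : M ⊗[k] N) (i), finsuppScalarLeft k N _ (e s) i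
      = applyFst k (b.coord i) s := by
    intro s i
    induction s using TensorProduct.induction_on with
    | zero => simp
    | tmul x a => simp [e, Module.Basis.coord_apply]
    | add s t hs ht => simp [map_add, hs, ht]
  have he : e t = 0 := by
    apply (finsuppScalarLeft k N _).injective
    ext i
    simp only [map_zero, Finsupp.coe_zero, Pi.zero_apply]
    rw [key, h]
  simpa using congrArg e.symm he

variable (G : GaloisContext k A X)

lemma galoisV_tmul (u v : X) :
    galoisV k A X G.α (u ⊗ₜ[k] v) = (u ⊗ₜ[k] (1 : A)) * G.α v := by
  simp [galoisV]

lemma galoisV_beta (a : A) : galoisV k A X G.α (G.β a) = (1 : X) ⊗ₜ[k] a := by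
  have : G.V (G.β a) = (1 : X) ⊗ₜ[k] a := by
    simp [GaloisContext.β, GaloisContext.V]
  simpa [GaloisContext.V, LinearEquiv.ofBijective_apply] using this

/-- The second Galois map `x ⊗ y ↦ α(x)(y ⊗ 1)`. -/
def galoisVp : X ⊗[k] X →ₗ[k] X ⊗[k] A :=
  LinearMap.mul' k (X ⊗[k] A) ∘ₗ
    TensorProduct.map G.α.toLinearMap ((TensorProduct.mk k X A).flip 1)

lemma galoisVp_tmul (u v : X) :
    galoisVp G (u ⊗ₜ[k] v) = G.α u * (v ⊗ₜ[k] (1 : A)) := by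
  simp [galoisVp]

-- multiplication shuffle lemmas
lemma applySnd_left_mul (g : A →ₗ[k] k) (z : X) (t : X ⊗[k] A) :
    applySnd k g ((z ⊗ₜ[k] (1 : A)) * t) = z * applySnd k g t := by
  induction t using TensorProduct.induction_on with
  | zero => simp
  | tmul x a => simp [Algebra.TensorProduct.tmul_mul_tmul, mul_smul_comm]
  | add s t hs ht => simp [mul_add, hs, ht]

lemma applySnd_mul_right (g : A →ₗ[k] k) (w : X) (t : X ⊗[k] A) :
    applySnd k g (t * (w ⊗ₜ[k] (1 : A))) = applySnd k g t * w := by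
  induction t using TensorProduct.induction_on with
  | zero => simp
  | tmul x a => simp [Algebra.TensorProduct.tmul_mul_tmul, smul_mul_assoc]
  | add s t hs ht => simp [add_mul, hs, ht]

lemma one_tmul_mul (a : A) (t : X ⊗[k] A) :
    ((1 : X) ⊗ₜ[k] a) * t = lTensor X (mulLeft k a) t := by
  induction t using TensorProduct.induction_on with
  | zero => simp
  | tmul x c => simp [Algebra.TensorProduct.tmul_mul_tmul]
  | add s t hs ht => simp [mul_add, hs, ht]

lemma mul_one_tmul (a : A) (t : X ⊗[k] A) :
    t * ((1 : X) ⊗ₜ[k] a) = lTensor X (mulRight k a) t := by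
  induction t using TensorProduct.induction_on with
  | zero => simp
  | tmul x c => simp [Algebra.TensorProduct.tmul_mul_tmul]
  | add s t hs ht => simp [add_mul, hs, ht]

lemma applySnd_mul_tmul_one (g : X →ₗ[k] k) (x : X) (t : X ⊗[k] X) :
    applySnd k g (t * ((1 : X) ⊗ₜ[k] x)) = applySnd k (g ∘ₗ mulRight k x) t := by
  induction t using TensorProduct.induction_on with
  | zero => simp
  | tmul u v => simp [Algebra.TensorProduct.tmul_mul_tmul]
  | add s t hs ht => simp [add_mul, hs, ht]

lemma applyFst_tmul_one_mul (g : X →ₗ[k] k) (x : X) (t : X ⊗[k] X) :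
    applyFst k g ((x ⊗ₜ[k] (1 : X)) * t) = applyFst k (g ∘ₗ mulLeft k x) t := by
  induction t using TensorProduct.induction_on with
  | zero => simp
  | tmul u v => simp [Algebra.TensorProduct.tmul_mul_tmul]
  | add s t hs ht => simp [mul_add, hs, ht]

-- kill lemmas
lemma kill_right (t : X ⊗[k] A)
    (h : ∀ a : A, applySnd k (G.φ ∘ₗ mulLeft k a) t = 0) : t = 0 := by
  refine eq_zero_of_forall_applyFst t fun f => ?_
  refine G.φ_faithful_right _ fun a => ?_
  have := coord_applySnd f (G.φ ∘ₗ mulLeft k a) t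
  rw [h] at this
  simpa using this.symm

lemma kill_left (t : X ⊗[k] A)
    (h : ∀ a : A, applySnd k (G.φ ∘ₗ mulRight k a) t = 0) : t = 0 := by
  refine eq_zero_of_forall_applyFst t fun f => ?_
  refine G.φ_faithful_left _ fun a => ?_
  have := coord_applySnd f (G.φ ∘ₗ mulRight k a) t
  rw [h] at this
  simpa using this.symm

-- V-multiplicativity
lemma galoisV_mul_alpha (s : X ⊗[k] X) (x : X) :
    galoisV k A X G.α s * G.α x = galoisV k A X G.α (s * ((1 : X) ⊗ₜ[k] x)) := by
  induction s using TensorProduct.induction_on with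
  | zero => simp
  | tmul u v =>
      simp only [galoisV_tmul, Algebra.TensorProduct.tmul_mul_tmul, mul_one, one_mul,
        mul_assoc, ← map_mul]
  | add s t hs ht => simp [add_mul, hs, ht]

lemma alpha_mul_galoisVp (s : X ⊗[k] X) (x : X) :
    G.α x * galoisVp G s = galoisVp G ((x ⊗ₜ[k] (1 : X)) * s) := by
  induction s using TensorProduct.induction_on with
  | zero => simp
  | tmul u v =>
      simp only [galoisVp_tmul, Algebra.TensorProduct.tmul_mul_tmul, mul_one, one_mul,
        ← mul_assoc, ← map_mul]
  | add s t hs ht => simp [mul_add, hs, ht]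

-- counit helper
lemma lTensor_unit_counit (t : X ⊗[k] A) :
    lTensor X ((Algebra.linearMap k A) ∘ₗ (Coalgebra.counit (R := k) (A := A))) t
      = (applySnd k (Coalgebra.counit (R := k) (A := A)) t) ⊗ₜ[k] (1 : A) := by
  induction t using TensorProduct.induction_on with
  | zero => simp
  | tmul x a =>
      simp [Algebra.linearMap_apply, Algebra.algebraMap_eq_smul_one, tmul_smul, smul_tmul']
  | add s t hs ht => simp [hs, ht, add_tmul]

-- coinvariance of E
lemma alpha_applySnd_phi (x : X) :
    G.α (applySnd k G.φ (G.α x)) = (applySnd k G.φ (G.α x)) ⊗ₜ[k] (1 : A) := by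
  have sub : ∀ (s : X ⊗[k] A) (c : A),
      lTensor X (applySnd k G.φ) (TensorProduct.assoc k X A A (s ⊗ₜ[k] c))
        = G.φ c • s := by
    intro s c
    induction s using TensorProduct.induction_on with
    | zero => simp
    | tmul u v => simp [tmul_smul, smul_tmul']
    | add s t hs ht => simp [add_tmul, hs, ht, smul_add]
  have lhs_eq : ∀ t : X ⊗[k] A, lTensor X (applySnd k G.φ)
      (TensorProduct.assoc k X A A (rTensor A G.α.toLinearMap t))
        = G.α (applySnd k G.φ t) := by
    intro t
    induction t using TensorProduct.induction_on with
    | zero => simp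
    | tmul u c => simp [sub]
    | add s t hs ht => simp [hs, ht]
  have rhs_eq : ∀ t : X ⊗[k] A, lTensor X (applySnd k G.φ)
      (lTensor X (Coalgebra.comul (R := k) (A := A)) t)
        = (applySnd k G.φ t) ⊗ₜ[k] (1 : A) := by
    intro t
    induction t using TensorProduct.induction_on with
    | zero => simp
    | tmul x a => simp [G.φ_integral, tmul_smul, smul_tmul']
    | add s t hs ht => simp [hs, ht, add_tmul]
  have := congrArg (lTensor X (applySnd k G.φ)) (G.coassoc x)
  rw [lhs_eq, rhs_eq] at this
  exact this

lemma exists_unit_functional [Nontrivial X] : ∃ f : X →ₗ[k] k, f 1 = 1 := by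
  obtain ⟨g, hg⟩ := (LinearMap.toSpanSingleton k X 1).exists_leftInverse_of_injective
    (LinearMap.ker_toSpanSingleton k (one_ne_zero : (1 : X) ≠ 0))
  refine ⟨g, ?_⟩
  have := LinearMap.congr_fun hg (1 : k)
  simpa [LinearMap.toSpanSingleton_apply] using this

-- The key "second Galois map" lemma: Vp (β b) = 1 ⊗ S b.
lemma galoisVp_beta (b : A) :
    galoisVp G (G.β b)
      = (1 : X) ⊗ₜ[k] (HopfAlgebra.antipode (R := k) (A := A) b) := by
  set S : A →ₗ[k] A := HopfAlgebra.antipode (R := k) (A := A) with hS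
  set χ : X ⊗[k] A →ₐ[k] (X ⊗[k] A) ⊗[k] A :=
    Algebra.TensorProduct.map G.α (AlgHom.id k A) with hχdef
  set Q : X ⊗[k] (A ⊗[k] A) →ₗ[k] X ⊗[k] A :=
    lTensor X (LinearMap.mul' k A ∘ₗ lTensor A S) with hQdef
  set ι : X ⊗[k] A →ₗ[k] X ⊗[k] (A ⊗[k] A) :=
    lTensor X ((TensorProduct.mk k A A).flip 1) with hιdef
  have hχ : ∀ t : X ⊗[k] A, χ t = rTensor A G.α.toLinearMap t := by
    intro t
    induction t using TensorProduct.induction_on with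
    | zero => simp
    | tmul x a => simp [hχdef]
    | add s t hs ht => simp [map_add, hs, ht]
  have hassoc : ∀ w : (X ⊗[k] A) ⊗[k] A,
      TensorProduct.assoc k X A A w = Algebra.TensorProduct.assoc k k k X A A w :=
    fun w => rfl
  have hassoc1 : ∀ s : X ⊗[k] A,
      TensorProduct.assoc k X A A (s ⊗ₜ[k] (1 : A)) = ι s := by
    intro s
    induction s using TensorProduct.induction_on with
    | zero => simp
    | tmul x a => simp [hιdef]
    | add s t hs ht => simp [add_tmul, hs, ht]
  have hQι : ∀ (s : X ⊗[k] A) (w : X ⊗[k] (A ⊗[k] A)), Q (ι s * w) = s * Q w := by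
    intro s w
    induction s using TensorProduct.induction_on with
    | zero => simp
    | tmul x a =>
        induction w using TensorProduct.induction_on with
        | zero => simp
        | tmul u p =>
            induction p using TensorProduct.induction_on with
            | zero => simp
            | tmul c d =>
                simp [hQdef, hιdef, Algebra.TensorProduct.tmul_mul_tmul, mul_assoc]
            | add p q hp hq =>
                simp only [tmul_add, mul_add, map_add] at *
                simp [hp, hq]
        | add w₁ w₂ h1 h2 => simp only [mul_add, map_add, h1, h2]
    | add s₁ s₂ h1 h2 => simp only [map_add, add_mul, h1, h2]
  have hQa : ∀ y : X,
      Q (lTensor X (Coalgebra.comul (R := k) (A := A)) (G.α y)) = y ⊗ₜ[k] (1 : A) := by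
    intro y
    have step : ∀ t : X ⊗[k] A,
        Q (lTensor X (Coalgebra.comul (R := k) (A := A)) t)
          = lTensor X ((Algebra.linearMap k A) ∘ₗ (Coalgebra.counit (R := k) (A := A))) t := by
      intro t
      induction t using TensorProduct.induction_on with
      | zero => simp
      | tmul x a =>
          have : (LinearMap.mul' k A ∘ₗ lTensor A S)
              ((Coalgebra.comul (R := k) (A := A)) a)
                = algebraMap k A ((Coalgebra.counit (R := k) (A := A)) a) := by
            have := HopfAlgebra.mul_antipode_lTensor_comul_apply (R := k) (A := A) a
            simpa [hS] using this
          simp [hQdef, this]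
      | add s t hs ht => simp [hs, ht]
    rw [step, lTensor_unit_counit, G.counit_id]
  have key : ∀ s : X ⊗[k] X,
      Q (TensorProduct.assoc k X A A (χ (galoisV k A X G.α s))) = galoisVp G s := by
    intro s
    induction s using TensorProduct.induction_on with
    | zero => simp
    | tmul u v =>
        rw [galoisV_tmul, map_mul, hassoc, map_mul]
        have e1 : χ (u ⊗ₜ[k] (1 : A)) = (G.α u) ⊗ₜ[k] (1 : A) := by
          simp [hχdef]
        have e2 : Algebra.TensorProduct.assoc k k k X A A ((G.α u) ⊗ₜ[k] (1 : A)) = ι (G.α u) := by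
          rw [← hassoc, hassoc1]
        rw [e1, e2, hχ, ← hassoc, G.coassoc v, hQι, hQa, galoisVp_tmul]
    | add s t hs ht => simp only [map_add, hs, ht]
  have := key (G.β b)
  rw [galoisV_beta] at this
  rw [← this]
  have hχ1 : χ ((1 : X) ⊗ₜ[k] b) = ((1 : X) ⊗ₜ[k] (1 : A)) ⊗ₜ[k] b := by
    simp [hχdef, Algebra.TensorProduct.one_def]
  rw [hχ1]
  simp [hQdef, Algebra.TensorProduct.one_def, hS]

@[simp] lemma applySnd_zero_map {M N : Type*} [AddCommGroup M] [Module k M]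
    [AddCommGroup N] [Module k N] (t : M ⊗[k] N) :
    applySnd k (0 : N →ₗ[k] k) t = 0 := by
  induction t using TensorProduct.induction_on with
  | zero => simp
  | tmul x a => simp
  | add s t hs ht => simp [hs, ht]

@[simp] lemma applyFst_zero_map {M N : Type*} [AddCommGroup M] [Module k M]
    [AddCommGroup N] [Module k N] (t : M ⊗[k] N) :
    applyFst k (0 : M →ₗ[k] k) t = 0 := by
  induction t using TensorProduct.induction_on with
  | zero => simp
  | tmul x a => simp
  | add s t hs ht => simp [hs, ht]

variable {G} {φX : X →ₗ[k] k}

lemma applySnd_phi_galoisV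
    (hφX : ∀ x : X, applySnd k G.φ (G.α x) = φX x • (1 : X)) (s : X ⊗[k] X) :
    applySnd k G.φ (galoisV k A X G.α s) = applySnd k φX s := by
  induction s using TensorProduct.induction_on with
  | zero => simp
  | tmul u v =>
      rw [galoisV_tmul, applySnd_left_mul, hφX]
      simp [mul_smul_comm]
  | add s t hs ht => simp [map_add, hs, ht]

lemma applySnd_phi_galoisVp
    (hφX : ∀ x : X, applySnd k G.φ (G.α x) = φX x • (1 : X)) (s : X ⊗[k] X) :
    applySnd k G.φ (galoisVp G s) = applyFst k φX s := by
  induction s using TensorProduct.induction_on with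
  | zero => simp
  | tmul u v =>
      rw [galoisVp_tmul, applySnd_mul_right, hφX]
      simp [smul_mul_assoc]
  | add s t hs ht => simp [map_add, hs, ht]

lemma right_faithful
    (hφX : ∀ x : X, applySnd k G.φ (G.α x) = φX x • (1 : X))
    (x : X) (hx : ∀ y : X, φX (y * x) = 0) : x = 0 := by
  have hzero : (φX ∘ₗ mulRight k x) = 0 := by ext y; simpa using hx y
  have h1 : ∀ a : A, applySnd k (G.φ ∘ₗ mulLeft k a) (G.α x) = 0 := by
    intro a
    calc applySnd k (G.φ ∘ₗ mulLeft k a) (G.α x)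
        = applySnd k G.φ (lTensor X (mulLeft k a) (G.α x)) :=
          (applySnd_lTensor _ _ _).symm
      _ = applySnd k G.φ (((1 : X) ⊗ₜ[k] a) * G.α x) := by rw [one_tmul_mul]
      _ = applySnd k G.φ (galoisV k A X G.α (G.β a * ((1 : X) ⊗ₜ[k] x))) := by
          rw [← galoisV_mul_alpha, galoisV_beta]
      _ = applySnd k φX (G.β a * ((1 : X) ⊗ₜ[k] x)) := applySnd_phi_galoisV hφX _
      _ = applySnd k (φX ∘ₗ mulRight k x) (G.β a) := applySnd_mul_tmul_one _ _ _
      _ = 0 := by rw [hzero]; simp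
  have h2 := kill_right G (G.α x) h1
  have h3 := G.counit_id x
  rw [h2] at h3
  simpa using h3.symm

lemma left_faithful
    (hφX : ∀ x : X, applySnd k G.φ (G.α x) = φX x • (1 : X))
    (x : X) (hx : ∀ y : X, φX (x * y) = 0) : x = 0 := by
  have hzero : (φX ∘ₗ mulLeft k x) = 0 := by ext y; simpa using hx y
  have h1 : ∀ a : A, applySnd k (G.φ ∘ₗ mulRight k a) (G.α x) = 0 := by
    intro a
    obtain ⟨b, hb⟩ := G.antipode_bijective.2 a
    calc applySnd k (G.φ ∘ₗ mulRight k a) (G.α x)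
        = applySnd k G.φ (lTensor X (mulRight k a) (G.α x)) :=
          (applySnd_lTensor _ _ _).symm
      _ = applySnd k G.φ (G.α x * ((1 : X) ⊗ₜ[k] a)) := by rw [mul_one_tmul]
      _ = applySnd k G.φ (G.α x * galoisVp G (G.β b)) := by rw [galoisVp_beta, hb]
      _ = applySnd k G.φ (galoisVp G ((x ⊗ₜ[k] (1 : X)) * G.β b)) := by
          rw [alpha_mul_galoisVp]
      _ = applyFst k φX ((x ⊗ₜ[k] (1 : X)) * G.β b) := applySnd_phi_galoisVp hφX _
      _ = applyFst k (φX ∘ₗ mulLeft k x) (G.β b) := applyFst_tmul_one_mul _ _ _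
      _ = 0 := by rw [hzero]; simp
  have h2 := kill_left G (G.α x) h1
  have h3 := G.counit_id x
  rw [h2] at h3
  simpa using h3.symm

lemma delta_invariant [Nontrivial X]
    (hφX : ∀ x : X, applySnd k G.φ (G.α x) = φX x • (1 : X))
    (δ : A) (hδ : ∀ a : A, applyFst k G.φ (Coalgebra.comul a) = G.φ a • δ)
    (x : X) : applyFst k φX (G.α x) = φX x • δ := by
  have sub : ∀ (s : X ⊗[k] A) (c : A),
      lTensor X (applyFst k G.φ) (TensorProduct.assoc k X A A (s ⊗ₜ[k] c))
        = (applySnd k G.φ s) ⊗ₜ[k] c := by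
    intro s c
    induction s using TensorProduct.induction_on with
    | zero => simp
    | tmul u v => simp [tmul_smul, smul_tmul']
    | add s t hs ht => simp [add_tmul, hs, ht]
  have lhs_eq : ∀ t : X ⊗[k] A, lTensor X (applyFst k G.φ)
      (TensorProduct.assoc k X A A (rTensor A G.α.toLinearMap t))
        = (1 : X) ⊗ₜ[k] applyFst k φX t := by
    intro t
    induction t using TensorProduct.induction_on with
    | zero => simp
    | tmul u c =>
        rw [rTensor_tmul, AlgHom.toLinearMap_apply, sub, hφX]
        simp [smul_tmul', tmul_smul]
    | add s t hs ht => simp [hs, ht, tmul_add]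
  have rhs_eq : ∀ t : X ⊗[k] A, lTensor X (applyFst k G.φ)
      (lTensor X (Coalgebra.comul (R := k) (A := A)) t)
        = (applySnd k G.φ t) ⊗ₜ[k] δ := by
    intro t
    induction t using TensorProduct.induction_on with
    | zero => simp
    | tmul x a => simp [hδ, tmul_smul, smul_tmul']
    | add s t hs ht => simp [hs, ht, add_tmul]
  have comb := congrArg (lTensor X (applyFst k G.φ)) (G.coassoc x)
  rw [lhs_eq, rhs_eq, hφX] at comb
  have comb2 : (1 : X) ⊗ₜ[k] applyFst k φX (G.α x) = (1 : X) ⊗ₜ[k] (φX x • δ) := by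
    rw [comb, ← smul_tmul', tmul_smul]
  obtain ⟨f, hf⟩ := exists_unit_functional (k := k) (X := X)
  have := congrArg (applyFst k f) comb2
  simpa [hf] using this

end PhiXAux

theorem galois_object_exists_phiX
    {k : Type*} [Field k] {A X : Type*} [Ring A] [HopfAlgebra k A]
    [Ring X] [Algebra k X] [Nontrivial X]
    (G : GaloisContext k A X)
    (δ : A) (hδ_unit : IsUnit δ)
    (hδ : ∀ a : A, applyFst k G.φ (Coalgebra.comul a) = G.φ a • δ) :
    (∃! φX : X →ₗ[k] k, ∀ x : X, applySnd k G.φ (G.α x) = φX x • (1 : X)) ∧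
    (∀ φX : X →ₗ[k] k, (∀ x : X, applySnd k G.φ (G.α x) = φX x • (1 : X)) →
      ((∀ x : X, (∀ y : X, φX (x * y) = 0) → x = 0) ∧
       (∀ x : X, (∀ y : X, φX (y * x) = 0) → x = 0) ∧
       (∀ x : X, applyFst k φX (G.α x) = φX x • δ))) := by
  classical
  obtain ⟨f, hf⟩ := exists_unit_functional (k := k) (X := X)
  have cancel : ∀ c c' : k, c • (1 : X) = c' • (1 : X) → c = c' := by
    intro c c' h
    have h2 : (c - c') • (1 : X) = 0 := by rw [sub_smul, h, sub_self]
    rcases smul_eq_zero.mp h2 with h3 | h3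
    · exact sub_eq_zero.mp h3
    · exact absurd h3 one_ne_zero
  set φX₀ : X →ₗ[k] k := f ∘ₗ ((applySnd k G.φ) ∘ₗ G.α.toLinearMap) with hφX₀
  have hprop : ∀ x : X, applySnd k G.φ (G.α x) = φX₀ x • (1 : X) := by
    intro x
    obtain ⟨c, hc⟩ := G.coinv_trivial _ (alpha_applySnd_phi G x)
    have hcx : φX₀ x = c := by
      simp only [hφX₀, LinearMap.comp_apply, AlgHom.toLinearMap_apply]
      rw [hc, map_smul, hf, smul_eq_mul, mul_one]
    rw [hcx, hc]
  refine ⟨⟨φX₀, hprop, ?_⟩, ?_⟩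
  · intro ψ hψ
    ext x
    exact cancel _ _ ((hψ x).symm.trans (hprop x))
  · intro φX hφX
    exact ⟨fun x hx => left_faithful hφX x hx,
      fun x hx => right_faithful hφX x hx,
      fun x => delta_invariant hφX δ hδ x⟩
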